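/- For all real a, b and all positive reals s, t, r, the following inequality holds: a²[∂₁θ(s,t)(r−s) + ∂₁θ(t,s)(s−t) + 2θ(t,s)] + 2ab[θ(s,t) + θ(s,r)] + b²[∂₁θ(s,r)(t−s) + ∂₁θ(r,s)(s−r) + 2θ(r,s)] ≥ 0. -/

import Mathlib

noncomputable def logMean (s t : ℝ) : ℝ := ∫ a in (0:ℝ)..1, s ^ a * t ^ (1 - a)

noncomputable def d1θ (s t : ℝ) : ℝ := deriv (fun u => logMean u t) s

open MeasureTheory intervalIntegral Real

private lemma cont_rpow {s : ℝ} (hs : 0 < s) {f : ℝ → ℝ} (hf : Continuous f) :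
    Continuous fun a => s ^ f a := by
  have : (fun a => s ^ f a) = fun a => Real.exp (Real.log s * f a) :=
    funext fun a => Real.rpow_def_of_pos hs _
  rw [this]
  exact Real.continuous_exp.comp (continuous_const.mul hf)

private lemma d1θ_eq {s t : ℝ} (hs : 0 < s) (ht : 0 < t) :
    d1θ s t = ∫ a in (0:ℝ)..1, a * s ^ (a - 1) * t ^ (1 - a) := by
  have key := intervalIntegral.hasDerivAt_integral_of_dominated_loc_of_deriv_le
    (𝕜 := ℝ) (μ := volume) (F := fun x α => x ^ α * t ^ (1 - α))
    (F' := fun x α => α * x ^ (α - 1) * t ^ (1 - α)) (x₀ := s) (a := 0) (b := 1)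
    (s := Metric.ball s (s / 2)) (bound := fun _ => max 1 (2 / s) * max 1 t) (Metric.ball_mem_nhds s (half_pos hs))
    ?_ ?_ ?_ ?_ ?_ ?_
  · exact key.2.deriv
  · filter_upwards [eventually_gt_nhds hs] with x hx
    exact ((cont_rpow hx continuous_id).mul
      (cont_rpow ht (continuous_const.sub continuous_id))).aestronglyMeasurable
  · exact ((cont_rpow hs continuous_id).mul
      (cont_rpow ht (continuous_const.sub continuous_id))).intervalIntegrable 0 1
  · exact ((continuous_id.mul (cont_rpow hs (continuous_id.sub continuous_const))).mul
      (cont_rpow ht (continuous_const.sub continuous_id))).aestronglyMeasurable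
  · refine ae_of_all _ fun α hα x hx => ?_
    rw [Set.uIoc_of_le (by norm_num : (0:ℝ) ≤ 1)] at hα
    obtain ⟨hα0, hα1⟩ := hα
    rw [Metric.mem_ball, Real.dist_eq, abs_sub_lt_iff] at hx
    have hx0 : s / 2 < x := by linarith [hx.2]
    have hxpos : 0 < x := lt_trans (half_pos hs) hx0
    have hb1 : x ^ (α - 1) ≤ max 1 (2 / s) := by
      rcases le_or_gt 1 x with h1 | h1
      · exact le_trans (Real.rpow_le_one_of_one_le_of_nonpos h1 (by linarith)) (le_max_left _ _)
      · refine le_trans ?_ (le_max_right _ _)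
        calc x ^ (α - 1) ≤ x ^ (-1:ℝ) :=
              Real.rpow_le_rpow_of_exponent_ge hxpos h1.le (by linarith)
          _ = 1 / x := by rw [Real.rpow_neg_one, one_div]
          _ ≤ 1 / (s / 2) := one_div_le_one_div_of_le (half_pos hs) hx0.le
          _ = 2 / s := by rw [one_div, inv_div]
    have hb2 : t ^ (1 - α) ≤ max 1 t := by
      rcases le_or_gt 1 t with h1 | h1
      · refine le_trans ?_ (le_max_right _ _)
        calc t ^ (1 - α) ≤ t ^ (1:ℝ) := Real.rpow_le_rpow_of_exponent_le h1 (by linarith)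
          _ = t := Real.rpow_one t
      · exact le_trans (Real.rpow_le_one ht.le h1.le (by linarith)) (le_max_left _ _)
    have hxp : (0:ℝ) ≤ x ^ (α - 1) := (Real.rpow_pos_of_pos hxpos _).le
    have htp : (0:ℝ) ≤ t ^ (1 - α) := (Real.rpow_pos_of_pos ht _).le
    rw [Real.norm_eq_abs, abs_of_nonneg (by positivity)]
    calc α * x ^ (α - 1) * t ^ (1 - α) ≤ 1 * (max 1 (2 / s)) * max 1 t := by
          apply mul_le_mul _ hb2 htp (by positivity)
          exact mul_le_mul hα1 hb1 hxp (by norm_num)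
      _ = max 1 (2 / s) * max 1 t := by ring
  · exact intervalIntegrable_const
  · refine ae_of_all _ fun α hα x hx => ?_
    rw [Metric.mem_ball, Real.dist_eq, abs_sub_lt_iff] at hx
    have hxpos : 0 < x := by linarith [hx.2, half_pos hs]
    exact (Real.hasDerivAt_rpow_const (Or.inl hxpos.ne')).mul_const _

private lemma logMean_symm (s t : ℝ) : logMean s t = logMean t s := by
  unfold logMean
  have h := intervalIntegral.integral_comp_sub_left (a := 0) (b := 1) (fun a => t ^ a * s ^ (1 - a)) 1
  simp only [sub_self, sub_zero] at h
  rw [← h]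
  apply intervalIntegral.integral_congr
  intro x _
  have e2 : 1 - (1 - x) = x := by ring
  simp only [e2]
  ring

private lemma d1θ_swap {s t : ℝ} (hs : 0 < s) (ht : 0 < t) :
    d1θ t s = ∫ a in (0:ℝ)..1, (1 - a) * t ^ (-a) * s ^ a := by
  rw [d1θ_eq ht hs]
  have h := intervalIntegral.integral_comp_sub_left (a := 0) (b := 1) (fun a => a * t ^ (a - 1) * s ^ (1 - a)) 1
  simp only [sub_self, sub_zero] at h
  rw [← h]
  apply intervalIntegral.integral_congr
  intro x _
  have e1 : 1 - x - 1 = -x := by ring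
  have e2 : 1 - (1 - x) = x := by ring
  simp only [e1, e2]

private lemma pointwise_tangent {s t r : ℝ} (a : ℝ) (hs : 0 < s) (ht : 0 < t) (hr : 0 < r)
    (ha : 0 ≤ a) (ha1 : a ≤ 1) :
    r ^ a * s ^ (1 - a) ≤
      s ^ a * t ^ (1 - a) + a * s ^ (a - 1) * t ^ (1 - a) * (r - s)
        + (1 - a) * t ^ (-a) * s ^ a * (s - t) := by
  have key := Real.geom_mean_le_arith_mean2_weighted ha (by linarith : (0:ℝ) ≤ 1 - a)
    (div_nonneg hr.le hs.le) (div_nonneg hs.le ht.le) (by ring)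
  have hX : (0:ℝ) < s ^ a := Real.rpow_pos_of_pos hs a
  have hY : (0:ℝ) < t ^ a := Real.rpow_pos_of_pos ht a
  have hR : (0:ℝ) < r ^ a := Real.rpow_pos_of_pos hr a
  have hs1 : s ^ (1 - a) = s / s ^ a := by
    rw [Real.rpow_sub hs, Real.rpow_one]
  have ht1 : t ^ (1 - a) = t / t ^ a := by
    rw [Real.rpow_sub ht, Real.rpow_one]
  have hsa1 : s ^ (a - 1) = s ^ a / s := by
    rw [Real.rpow_sub hs, Real.rpow_one]
  have hta : t ^ (-a) = (t ^ a)⁻¹ := Real.rpow_neg ht.le a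
  have hrs : (r / s) ^ a = r ^ a / s ^ a := Real.div_rpow hr.le hs.le a
  have hst : (s / t) ^ (1 - a) = s ^ (1 - a) / t ^ (1 - a) := Real.div_rpow hs.le ht.le _
  rw [hrs, hst, hs1, ht1] at key
  rw [hs1, ht1, hsa1, hta]
  have hfac : (0:ℝ) < s ^ a * (t / t ^ a) := by positivity
  have h2 := mul_le_mul_of_nonneg_right key hfac.le
  calc r ^ a * (s / s ^ a)
      = r ^ a / s ^ a * (s / s ^ a / (t / t ^ a)) * (s ^ a * (t / t ^ a)) := by
        field_simp
    _ ≤ (a * (r / s) + (1 - a) * (s / t)) * (s ^ a * (t / t ^ a)) := h2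
    _ = s ^ a * (t / t ^ a) + a * (s ^ a / s) * (t / t ^ a) * (r - s)
        + (1 - a) * (t ^ a)⁻¹ * s ^ a * (s - t) := by
        field_simp
        ring

private lemma tangent {s t r : ℝ} (hs : 0 < s) (ht : 0 < t) (hr : 0 < r) :
    logMean r s ≤ logMean s t + d1θ s t * (r - s) + d1θ t s * (s - t) := by
  rw [d1θ_eq hs ht, d1θ_swap hs ht]
  unfold logMean
  have c1 : Continuous fun a : ℝ => r ^ a * s ^ (1 - a) :=
    (cont_rpow hr continuous_id).mul (cont_rpow hs (continuous_const.sub continuous_id))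
  have c2 : Continuous fun a : ℝ => s ^ a * t ^ (1 - a) :=
    (cont_rpow hs continuous_id).mul (cont_rpow ht (continuous_const.sub continuous_id))
  have c3 : Continuous fun a : ℝ => a * s ^ (a - 1) * t ^ (1 - a) * (r - s) :=
    ((continuous_id.mul (cont_rpow hs (continuous_id.sub continuous_const))).mul
      (cont_rpow ht (continuous_const.sub continuous_id))).mul continuous_const
  have c4 : Continuous fun a : ℝ => (1 - a) * t ^ (-a) * s ^ a * (s - t) :=
    (((continuous_const.sub continuous_id).mul (cont_rpow ht continuous_neg)).mul
      (cont_rpow hs continuous_id)).mul continuous_const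
  rw [← intervalIntegral.integral_mul_const, ← intervalIntegral.integral_mul_const,
    ← intervalIntegral.integral_add (c2.intervalIntegrable 0 1) (c3.intervalIntegrable 0 1),
    ← intervalIntegral.integral_add (f := fun x => s ^ x * t ^ (1 - x) + x * s ^ (x - 1) * t ^ (1 - x) * (r - s)) ((c2.add c3).intervalIntegrable 0 1)
      (c4.intervalIntegrable 0 1)]
  apply intervalIntegral.integral_mono_on (by norm_num : (0:ℝ) ≤ 1)
    (c1.intervalIntegrable 0 1) ((c2.add c3 |>.add c4).intervalIntegrable 0 1)
  intro x hx
  exact pointwise_tangent x hs ht hr hx.1 hx.2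

private lemma logMean_nonneg {s t : ℝ} (hs : 0 < s) (ht : 0 < t) : 0 ≤ logMean s t := by
  apply intervalIntegral.integral_nonneg (by norm_num : (0:ℝ) ≤ 1)
  intro u _
  positivity

/-- The key pointwise estimate underlying the perturbative Ricci bound. -/
theorem pointwise_quadratic_form_nonneg (a b s t r : ℝ)
    (hs : 0 < s) (ht : 0 < t) (hr : 0 < r) :
    a ^ 2 * (d1θ s t * (r - s) + d1θ t s * (s - t) + 2 * logMean t s)
      + 2 * a * b * (logMean s t + logMean s r)
      + b ^ 2 * (d1θ s r * (t - s) + d1θ r s * (s - r) + 2 * logMean r s) ≥ 0 := by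
  have h1 := tangent hs ht hr
  have h2 := tangent hs hr ht
  have e1 : logMean s t = logMean t s := logMean_symm s t
  have e2 : logMean s r = logMean r s := logMean_symm s r
  set C : ℝ := logMean t s + logMean r s with hC
  have hC0 : 0 ≤ C := add_nonneg (logMean_nonneg ht hs) (logMean_nonneg hr hs)
  have hA : C ≤ d1θ s t * (r - s) + d1θ t s * (s - t) + 2 * logMean t s := by
    rw [e1] at h1; simp only [hC]; linarith
  have hB : C ≤ d1θ s r * (t - s) + d1θ r s * (s - r) + 2 * logMean r s := by
    rw [e2] at h2; simp only [hC]; linarith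
  have hCeq : logMean s t + logMean s r = C := by rw [e1, e2]
  rw [hCeq]
  nlinarith [mul_le_mul_of_nonneg_left hA (sq_nonneg a),
    mul_le_mul_of_nonneg_left hB (sq_nonneg b),
    mul_nonneg (sq_nonneg (a + b)) hC0]
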